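/- Let (Ω, 𝒜, ℙ) be a probability space, let 𝒴 be a finite nonempty set, let 𝒳ₚ be a finite nonempty set, and let Y : Ω → 𝒴, Ỹ : Ω → 𝒴 and Xₚ : Ω → 𝒳ₚ be measurable maps. Suppose: (i) for every y ∈ 𝒴 and every xₚ ∈ 𝒳ₚ with ℙ(Xₚ = xₚ) > 0, ℙ(Y = y | Xₚ = xₚ) = ℙ(Y = y) (the true decision process does not suffer from disparate impact); and (ii) for every ỹ, y ∈ 𝒴 and every xₚ ∈ 𝒳ₚ with ℙ(Y = y ∩ Xₚ = xₚ) > 0, ℙ(Ỹ = ỹ | Y = y ∩ Xₚ = xₚ) = ℙ(Ỹ = ỹ | Y = y) (the learned classifier does not suffer from disparate mistreatment). Then the learned classifier does not suffer from disparate impact: for every ỹ ∈ 𝒴 and every xₚ ∈ 𝒳ₚ with ℙ(Xₚ = xₚ) > 0, ℙ(Ỹ = ỹ | Xₚ = xₚ) = ℙ(Ỹ = ỹ). (In case (ii) is vacuous for some y because ℙ(Y = y ∩ Xₚ = xₚ) = 0, note that by (i) this forces ℙ(Y = y) = 0, so that term does not contribute.) -/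

import Mathlib

open MeasureTheory

/-- **Proposition 1 (paper).** If the true decision process `Y` does not suffer from
disparate impact relative to the protected attribute `Xp`, and the learned classifier
`Yt` does not suffer from disparate mistreatment (its conditional misclassification
probabilities given the true label do not change after observing `Xp`), then the
learned classifier does not suffer from disparate impact. Conditional probabilities
`ℙ(A|B) = ℙ(A ∩ B)/ℙ(B)` are written out explicitly. -/
theorem learned_classifier_no_disparate_impact
    {Ω 𝒴 𝒳p : Type*} [MeasurableSpace Ω]
    [Fintype 𝒴] [Nonempty 𝒴] [MeasurableSpace 𝒴] [MeasurableSingletonClass 𝒴]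
    [Fintype 𝒳p] [Nonempty 𝒳p] [MeasurableSpace 𝒳p] [MeasurableSingletonClass 𝒳p]
    (μ : Measure Ω) [IsProbabilityMeasure μ]
    (Y Yt : Ω → 𝒴) (Xp : Ω → 𝒳p)
    (hY : Measurable Y) (hYt : Measurable Yt) (hXp : Measurable Xp)
    -- (i) the true process does not suffer from disparate impact
    (h1 : ∀ (y : 𝒴) (xp : 𝒳p), 0 < μ {ω | Xp ω = xp} →
      μ ({ω | Y ω = y} ∩ {ω | Xp ω = xp}) / μ {ω | Xp ω = xp} = μ {ω | Y ω = y})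
    -- (ii) the learned classifier does not suffer from disparate mistreatment
    (h2 : ∀ (yt y : 𝒴) (xp : 𝒳p), 0 < μ ({ω | Y ω = y} ∩ {ω | Xp ω = xp}) →
      μ ({ω | Yt ω = yt} ∩ ({ω | Y ω = y} ∩ {ω | Xp ω = xp})) /
          μ ({ω | Y ω = y} ∩ {ω | Xp ω = xp})
        = μ ({ω | Yt ω = yt} ∩ {ω | Y ω = y}) / μ {ω | Y ω = y}) :
    -- conclusion: the learned classifier does not suffer from disparate impact
    ∀ (yt : 𝒴) (xp : 𝒳p), 0 < μ {ω | Xp ω = xp} →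
      μ ({ω | Yt ω = yt} ∩ {ω | Xp ω = xp}) / μ {ω | Xp ω = xp} = μ {ω | Yt ω = yt} := by
  intro yt xp hxp
  set A := {ω | Yt ω = yt} with hA
  set B := {ω | Xp ω = xp} with hBdef
  have hB0 : μ B ≠ 0 := hxp.ne'
  have hBt : μ B ≠ ⊤ := measure_ne_top μ B
  have hmA : MeasurableSet A := hYt (measurableSet_singleton yt)
  have hmB : MeasurableSet B := hXp (measurableSet_singleton xp)
  have hmYy : ∀ y : 𝒴, MeasurableSet {ω | Y ω = y} :=
    fun y => hY (measurableSet_singleton y)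
  -- key pointwise identity
  have key : ∀ y : 𝒴, μ (A ∩ ({ω | Y ω = y} ∩ B)) = μ (A ∩ {ω | Y ω = y}) * μ B := by
    intro y
    have h1' := h1 y xp hxp
    have hYB : μ ({ω | Y ω = y} ∩ B) = μ {ω | Y ω = y} * μ B := by
      rw [← h1', ENNReal.div_mul_cancel hB0 hBt]
    by_cases hpos : 0 < μ ({ω | Y ω = y} ∩ B)
    · have h2' := h2 yt y xp hpos
      have hYne : μ {ω | Y ω = y} ≠ 0 := by
        intro h
        rw [hYB, h, zero_mul] at hpos
        exact lt_irrefl _ hpos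
      have hYnt : μ {ω | Y ω = y} ≠ ⊤ := measure_ne_top _ _
      have hYBne : μ ({ω | Y ω = y} ∩ B) ≠ 0 := hpos.ne'
      have hYBnt : μ ({ω | Y ω = y} ∩ B) ≠ ⊤ := measure_ne_top _ _
      have := congrArg (· * μ ({ω | Y ω = y} ∩ B)) h2'
      simp only [← hBdef, ENNReal.div_mul_cancel hYBne hYBnt] at this
      rw [this, hYB, ← mul_assoc, ENNReal.div_mul_cancel hYne hYnt]
    · have hz : μ ({ω | Y ω = y} ∩ B) = 0 := le_antisymm (not_lt.mp hpos) zero_le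
      have hYz : μ {ω | Y ω = y} = 0 := by
        rw [← h1', hz, ENNReal.zero_div]
      have h1l : μ (A ∩ ({ω | Y ω = y} ∩ B)) = 0 :=
        measure_mono_null Set.inter_subset_right hz
      have h2l : μ (A ∩ {ω | Y ω = y}) = 0 :=
        measure_mono_null Set.inter_subset_right hYz
      rw [h1l, h2l, zero_mul]
  -- decomposition lemma
  have decomp : ∀ S : Set Ω, MeasurableSet S → μ (A ∩ S) = ∑ y : 𝒴, μ (A ∩ ({ω | Y ω = y} ∩ S)) := by
    intro S hS
    have hu : A ∩ S = ⋃ y : 𝒴, A ∩ ({ω | Y ω = y} ∩ S) := by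
      ext ω
      simp only [Set.mem_inter_iff, Set.mem_iUnion, Set.mem_setOf_eq]
      constructor
      · rintro ⟨h1, h2⟩; exact ⟨Y ω, h1, rfl, h2⟩
      · rintro ⟨y, h1, _, h2⟩; exact ⟨h1, h2⟩
    rw [hu, measure_iUnion, tsum_fintype]
    · intro i j hij
      simp only [Function.onFun, Set.disjoint_left]
      rintro ω ⟨-, hy, -⟩ ⟨-, hy', -⟩
      exact hij (hy ▸ hy')
    · exact fun y => hmA.inter ((hmYy y).inter hS)
  have hAB : μ (A ∩ B) = μ A * μ B := by
    rw [decomp B hmB]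
    have : (∑ y : 𝒴, μ (A ∩ ({ω | Y ω = y} ∩ B))) = ∑ y : 𝒴, μ (A ∩ {ω | Y ω = y}) * μ B := by
      exact Finset.sum_congr rfl fun y _ => key y
    rw [this, ← Finset.sum_mul]
    congr 1
    have := decomp Set.univ MeasurableSet.univ
    simpa [Set.inter_univ] using this.symm
  rw [hAB, mul_div_assoc, ENNReal.div_self hB0 hBt, mul_one]
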